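/- Let M_n be the n×n matrix with entries (M_n)_{ij} = 1 if i + j ≤ n and (M_n)_{ij} = -1 if i + j > n (indices 1 ≤ i, j ≤ n). Then for every integer n > 3, det(M_n) = (-1)^{∑_{l=4}^{n} l} · 2^{n-3} · 4, where ∑_{l=4}^{n} l = n(n+1)/2 - 6. -/

import Mathlib

/-- The n×n matrix with entries `1` if `i + j ≤ n` and `-1` otherwise,
for 1-based indices `1 ≤ i, j ≤ n`. -/
def Mmat (n : ℕ) : Matrix (Fin n) (Fin n) ℝ :=
  fun i j => if (i : ℕ) + 1 + ((j : ℕ) + 1) ≤ n then 1 else -1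

def Amat (n : ℕ) : Matrix (Fin n) (Fin n) ℝ :=
  fun i j => if n ≤ (i : ℕ) + (j : ℕ) + 1 then 1 else 0

def Bmat (n : ℕ) : Matrix (Fin n) (Fin n) ℝ :=
  fun k j => (if k = j then -2 else 0) + (if (k : ℕ) = n - 1 then 1 else 0)

lemma detA (n : ℕ) : (Amat n).det = (-1 : ℝ) ^ (∑ k ∈ Finset.range n, k) := by
  induction n with
  | zero => simp [Amat]
  | succ m ih =>
    rw [Matrix.det_succ_row_zero]
    rw [Finset.sum_eq_single (Fin.last m)]
    · have h1 : Amat (m+1) 0 (Fin.last m) = 1 := by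
        simp [Amat]
      have h2 : (Amat (m+1)).submatrix Fin.succ (Fin.last m).succAbove = Amat m := by
        ext i j
        simp only [Matrix.submatrix_apply, Fin.succAbove_last, Amat, Fin.val_succ,
          Fin.coe_castSucc]
        exact if_congr (by omega) rfl rfl
      rw [h1, h2, ih, Finset.sum_range_succ, pow_add]
      simp [Fin.val_last]
      ring
    · intro j _ hj
      have h0 : Amat (m+1) 0 j = 0 := by
        have hlt : (j : ℕ) < m := by
          have h1 := j.isLt
          have h2 : (j : ℕ) ≠ m := fun h => hj (Fin.ext h)
          omega
        simp only [Amat, Fin.val_zero]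
        exact if_neg (by omega)
      rw [h0]; ring
    · intro h; exact absurd (Finset.mem_univ _) h

lemma factor (n : ℕ) (hn : 0 < n) : Mmat n = Amat n * Bmat n := by
  ext i j
  rw [Matrix.mul_apply]
  simp only [Bmat, mul_add]
  rw [Finset.sum_add_distrib]
  have e1 : (∑ k : Fin n, Amat n i k * if k = j then (-2:ℝ) else 0)
      = Amat n i j * -2 := by
    rw [Finset.sum_congr rfl (fun k _ => by rw [mul_ite, mul_zero])]
    rw [Finset.sum_ite_eq' Finset.univ j (fun k => Amat n i k * -2),
      if_pos (Finset.mem_univ _)]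
  have e2 : (∑ k : Fin n, Amat n i k * if (k : ℕ) = n - 1 then (1:ℝ) else 0)
      = 1 := by
    have hc : ∀ k : Fin n, (Amat n i k * if (k : ℕ) = n - 1 then (1:ℝ) else 0)
        = if k = (⟨n - 1, by omega⟩ : Fin n) then Amat n i k else 0 := by
      intro k
      by_cases h : (k : ℕ) = n - 1
      · rw [if_pos h, if_pos (Fin.ext h)]; ring
      · rw [if_neg h, if_neg (fun hh => h (by rw [hh]))]; ring
    rw [Finset.sum_congr rfl (fun k _ => hc k),
      Finset.sum_ite_eq' Finset.univ _ (fun k => Amat n i k),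
      if_pos (Finset.mem_univ _)]
    simp only [Amat]
    rw [if_pos (by omega)]
  rw [e1, e2]
  simp only [Mmat, Amat]
  split_ifs with h1 h2 h2 <;> first
    | (exfalso; omega)
    | norm_num

lemma detB (m : ℕ) : (Bmat (m+1)).det = (-2 : ℝ) ^ m * (-1) := by
  rw [Matrix.det_of_lowerTriangular]
  · rw [Fin.prod_univ_castSucc]
    have h1 : ∀ k : Fin m, Bmat (m+1) k.castSucc k.castSucc = -2 := by
      intro k
      simp only [Bmat]
      rw [if_pos trivial, if_neg (show ¬((k.castSucc : ℕ) = m + 1 - 1) by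
        have hk := k.isLt
        simp only [Fin.coe_castSucc]
        omega)]
      ring
    have h2 : Bmat (m+1) (Fin.last m) (Fin.last m) = -1 := by
      simp only [Bmat]
      rw [if_pos trivial, if_pos (show ((Fin.last m : Fin (m+1)) : ℕ) = m + 1 - 1 by
        simp [Fin.val_last])]
      ring
    rw [h2, Finset.prod_congr rfl (fun k _ => h1 k), Finset.prod_const]
    simp
  · intro i j hij
    simp only [OrderDual.toDual_lt_toDual] at hij
    have hv : (i : ℕ) < (j : ℕ) := hij
    have hj := j.isLt
    simp only [Bmat]
    rw [if_neg (Fin.ne_of_lt hij), if_neg (show ¬((i : ℕ) = m + 1 - 1) by omega)]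
    ring

theorem stmt_1 (n : ℕ) (hn : 3 < n) :
    (Mmat n).det = (-1 : ℝ) ^ (∑ l ∈ Finset.Icc 4 n, l) * 2 ^ (n - 3) * 4 ∧
    (∑ l ∈ Finset.Icc 4 n, l) = n * (n + 1) / 2 - 6 := by
  obtain ⟨m, rfl⟩ : ∃ m, n = m + 1 := ⟨n - 1, by omega⟩
  have hm : 3 ≤ m := by omega
  have hsplit : (∑ k ∈ Finset.range (m + 2), k)
      = 6 + ∑ l ∈ Finset.Icc 4 (m + 1), l := by
    rw [Finset.range_eq_Ico,
      ← Finset.sum_Ico_consecutive _ (by omega : 0 ≤ 4) (by omega : 4 ≤ m + 2)]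
    have h04 : (∑ k ∈ Finset.Ico 0 4, k) = 6 := by decide
    rw [h04, show m + 2 = m + 1 + 1 by rfl, Finset.Ico_add_one_right_eq_Icc]
  have hgauss : (∑ k ∈ Finset.range (m + 2), k) * 2 = (m + 2) * (m + 1) :=
    Finset.sum_range_id_mul_two (m + 2)
  constructor
  · rw [factor _ (by omega), Matrix.det_mul, detA, detB]
    have hE : (∑ k ∈ Finset.range (m + 1), k) + (m + 1)
        = (∑ l ∈ Finset.Icc 4 (m + 1), l) + 6 := by
      have h := hsplit
      rw [Finset.sum_range_succ] at h
      omega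
    have h2pow : (2 : ℝ) ^ (m + 1 - 3) * 4 = 2 ^ m := by
      have h : m + 1 - 3 + 2 = m := by omega
      calc (2:ℝ) ^ (m+1-3) * 4 = 2 ^ (m+1-3) * 2 ^ 2 := by norm_num
        _ = 2 ^ (m+1-3+2) := by rw [pow_add]
        _ = 2 ^ m := by rw [h]
    have key : (-1 : ℝ) ^ (∑ k ∈ Finset.range (m + 1), k) * ((-2) ^ m * -1)
        = (-1) ^ (∑ l ∈ Finset.Icc 4 (m + 1), l) * 2 ^ m := by
      have hneg2 : ((-2 : ℝ)) ^ m = (-1) ^ m * 2 ^ m := by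
        rw [← neg_one_mul, mul_pow]
      have hsgn : (-1 : ℝ) ^ ((∑ k ∈ Finset.range (m + 1), k) + (m + 1))
          = (-1) ^ (∑ l ∈ Finset.Icc 4 (m + 1), l) := by
        rw [hE, pow_add]
        norm_num
      calc (-1 : ℝ) ^ (∑ k ∈ Finset.range (m + 1), k) * ((-2) ^ m * -1)
          = (-1 : ℝ) ^ ((∑ k ∈ Finset.range (m + 1), k) + (m + 1)) * 2 ^ m := by
            rw [hneg2, pow_add, pow_add]; ring
        _ = (-1) ^ (∑ l ∈ Finset.Icc 4 (m + 1), l) * 2 ^ m := by rw [hsgn]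
    rw [mul_assoc, h2pow, key]
  · obtain ⟨K, hK⟩ : ∃ K, (m + 2) * (m + 1) = K := ⟨_, rfl⟩
    have hK2 : (m + 1) * (m + 1 + 1) = K := by rw [← hK]; ring
    rw [hK2]
    omega
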